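/- If G is a graph of order n, then the complement Ḡ has no eigenvalue strictly between −1 − λₙ(G) and λ₁(Ḡ), i.e., no eigenvalue in the open interval (−1 − λₙ(G), λ₁(Ḡ)). -/

import Mathlib

open Matrix Finset Polynomial

variable {V : Type*} [Fintype V] [DecidableEq V]

/-- `μ` is an eigenvalue of the adjacency matrix of `G`. -/
def SimpleGraph.IsEigenvalue (G : SimpleGraph V) [DecidableRel G.Adj] (μ : ℝ) : Prop :=
  ∃ x : V → ℝ, x ≠ 0 ∧ (G.adjMatrix ℝ) *ᵥ x = μ • x

/-- `μ` is a main eigenvalue: some associated eigenvector is not orthogonal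
to the all-ones vector. -/
def SimpleGraph.IsMainEigenvalue (G : SimpleGraph V) [DecidableRel G.Adj] (μ : ℝ) : Prop :=
  ∃ x : V → ℝ, x ≠ 0 ∧ (G.adjMatrix ℝ) *ᵥ x = μ • x ∧ ∑ v, x v ≠ 0

/-- `μ` is a non-main eigenvalue: it is an eigenvalue whose eigenspace is
orthogonal to the all-ones vector. -/
def SimpleGraph.IsNonMainEigenvalue (G : SimpleGraph V) [DecidableRel G.Adj] (μ : ℝ) : Prop :=
  G.IsEigenvalue μ ∧ ¬ G.IsMainEigenvalue μ

/-- The multiplicity of `μ` as an eigenvalue of `G` (as a root of the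
characteristic polynomial of the adjacency matrix). -/
noncomputable def SimpleGraph.eigMult (G : SimpleGraph V) [DecidableRel G.Adj] (μ : ℝ) : ℕ :=
  ((G.adjMatrix ℝ).charpoly).rootMultiplicity μ

/-- `G` is harmonic: its degree vector is an eigenvector of the adjacency matrix
associated with a positive integer eigenvalue. -/
def SimpleGraph.IsHarmonic (G : SimpleGraph V) [DecidableRel G.Adj] : Prop :=
  ∃ ℓ : ℕ, 0 < ℓ ∧
    (G.adjMatrix ℝ) *ᵥ (fun v => (G.degree v : ℝ)) = (ℓ : ℝ) • (fun v => (G.degree v : ℝ))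

/-- The adjacency matrix of a real symmetric graph is Hermitian. -/
lemma adjMatrix_isHermitian (G : SimpleGraph V) [DecidableRel G.Adj] :
    (G.adjMatrix ℝ).IsHermitian := by
  ext i j
  simp [Matrix.conjTranspose_apply, SimpleGraph.adjMatrix_apply, G.adj_comm]

/-- Rayleigh lower bound: if `lamn` is the least eigenvalue of `G`, then
`lamn * (y⬝y) ≤ y ⬝ (A y)` for every vector `y`. -/
lemma rayleigh_lower (G : SimpleGraph V) [DecidableRel G.Adj] (lamn : ℝ)
    (hmin : IsLeast {μ | G.IsEigenvalue μ} lamn) (y : V → ℝ) :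
    lamn * (y ⬝ᵥ y) ≤ y ⬝ᵥ (G.adjMatrix ℝ *ᵥ y) := by
  set A := G.adjMatrix ℝ with hAdef
  have hAh : A.IsHermitian := adjMatrix_isHermitian G
  set M : Matrix V V ℝ := A - lamn • (1 : Matrix V V ℝ) with hMdef
  have hMh : M.IsHermitian := by
    apply hAh.sub
    ext i j
    simp [Matrix.conjTranspose_apply, Matrix.one_apply]
    split <;> simp_all [eq_comm]
  have hev : ∀ i : V, 0 ≤ hMh.eigenvalues i := by
    intro i
    have hb := hMh.mulVec_eigenvectorBasis i
    set b : V → ℝ := ⇑(hMh.eigenvectorBasis i) with hbdef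
    have hbne : b ≠ 0 := by
      intro h
      apply hMh.eigenvectorBasis.orthonormal.ne_zero i
      ext v
      exact congrFun h v
    have hMb : M *ᵥ b = hMh.eigenvalues i • b := hb
    have hAb : A *ᵥ b = (hMh.eigenvalues i + lamn) • b := by
      have : M *ᵥ b = A *ᵥ b - lamn • b := by
        rw [hMdef, Matrix.sub_mulVec, Matrix.smul_mulVec, Matrix.one_mulVec]
      rw [this] at hMb
      have : A *ᵥ b = hMh.eigenvalues i • b + lamn • b := by
        rw [← hMb]; abel
      rw [this, ← add_smul]
    have : (hMh.eigenvalues i + lamn) ∈ {μ | G.IsEigenvalue μ} := ⟨b, hbne, hAb⟩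
    have := hmin.2 this
    linarith
  have hpsd : M.PosSemidef := hMh.posSemidef_iff_eigenvalues_nonneg.mpr hev
  have h0 := hpsd.dotProduct_mulVec_nonneg y
  rw [star_trivial] at h0
  have hMy : M *ᵥ y = A *ᵥ y - lamn • y := by
    rw [hMdef, Matrix.sub_mulVec, Matrix.smul_mulVec, Matrix.one_mulVec]
  rw [hMy, dotProduct_sub, dotProduct_smul, smul_eq_mul] at h0
  linarith

/-- The complement identity at the level of quadratic forms. -/
lemma quad_identity (G : SimpleGraph V) [DecidableRel G.Adj] (y : V → ℝ) :
    y ⬝ᵥ (G.adjMatrix ℝ *ᵥ y)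
      = (∑ v, y v) ^ 2 - y ⬝ᵥ y - y ⬝ᵥ (Gᶜ.adjMatrix ℝ *ᵥ y) := by
  have hmat : G.adjMatrix ℝ = (Matrix.of fun _ _ => (1 : ℝ)) - 1 - Gᶜ.adjMatrix ℝ := by
    ext i j
    by_cases hij : i = j
    · subst hij
      simp [SimpleGraph.adjMatrix_apply, Matrix.one_apply]
    · by_cases hadj : G.Adj i j
      · simp [SimpleGraph.adjMatrix_apply, Matrix.one_apply, hij, hadj]
      · simp [SimpleGraph.adjMatrix_apply, Matrix.one_apply, hij, hadj]
  have hJ : y ⬝ᵥ ((Matrix.of fun _ _ => (1 : ℝ)) *ᵥ y) = (∑ v, y v) ^ 2 := by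
    simp only [dotProduct, Matrix.mulVec, Matrix.of_apply, dotProduct,
      one_mul]
    rw [sq, ← Finset.sum_mul]
  rw [hmat, Matrix.sub_mulVec, Matrix.sub_mulVec, dotProduct_sub,
    dotProduct_sub, hJ, Matrix.one_mulVec]

/-- Key inequality: any eigenpair `(ν, y)` of the complement satisfies
`(1 + ν + lamn) * (y⬝y) ≤ (∑ y)²`. -/
lemma key_ineq (G : SimpleGraph V) [DecidableRel G.Adj] (lamn : ℝ)
    (hmin : IsLeast {μ | G.IsEigenvalue μ} lamn) (ν : ℝ) (y : V → ℝ)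
    (hy : Gᶜ.adjMatrix ℝ *ᵥ y = ν • y) :
    (1 + ν + lamn) * (y ⬝ᵥ y) ≤ (∑ v, y v) ^ 2 := by
  have h1 := rayleigh_lower G lamn hmin y
  have h2 := quad_identity G y
  rw [hy, dotProduct_smul, smul_eq_mul] at h2
  rw [h2] at h1
  nlinarith [h1]

theorem no_eigenvalue_in_open_interval (G : SimpleGraph V) [DecidableRel G.Adj]
    (lamn mu1 : ℝ)
    (hmin : IsLeast {μ | G.IsEigenvalue μ} lamn)
    (hmax : IsGreatest {μ | Gᶜ.IsEigenvalue μ} mu1) :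
    ∀ μ : ℝ, Gᶜ.IsEigenvalue μ → μ ∉ Set.Ioo (-1 - lamn) mu1 := by
  rintro μ ⟨x, hx0, hx⟩ ⟨hμl, hμu⟩
  obtain ⟨w, hw0, hw⟩ := hmax.1
  set B := Gᶜ.adjMatrix ℝ with hBdef
  have hBs : B.IsSymm := Gᶜ.isSymm_adjMatrix
  have hxx : (0:ℝ) < x ⬝ᵥ x := by
    have hnn : (0:ℝ) ≤ x ⬝ᵥ x := Finset.sum_nonneg fun i _ => mul_self_nonneg _
    rcases lt_or_eq_of_le hnn with h | h
    · exact h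
    · exact absurd (dotProduct_self_eq_zero.mp h.symm) hx0
  have hww : (0:ℝ) < w ⬝ᵥ w := by
    have hnn : (0:ℝ) ≤ w ⬝ᵥ w := Finset.sum_nonneg fun i _ => mul_self_nonneg _
    rcases lt_or_eq_of_le hnn with h | h
    · exact h
    · exact absurd (dotProduct_self_eq_zero.mp h.symm) hw0
  -- orthogonality of x and w
  have hxw : x ⬝ᵥ w = 0 := by
    have h1 : x ⬝ᵥ (B *ᵥ w) = mu1 * (x ⬝ᵥ w) := by
      rw [hw, dotProduct_smul, smul_eq_mul]
    have h2 : x ⬝ᵥ (B *ᵥ w) = μ * (x ⬝ᵥ w) := by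
      rw [Matrix.dotProduct_mulVec, ← Matrix.mulVec_transpose, hBs.eq, hx]
      rw [smul_dotProduct, smul_eq_mul]
    have : (mu1 - μ) * (x ⬝ᵥ w) = 0 := by linarith [h1, h2]
    rcases mul_eq_zero.mp this with h | h
    · exact absurd (by linarith : mu1 = μ) (ne_of_gt hμu)
    · exact h
  have hwx : w ⬝ᵥ x = 0 := by rw [dotProduct_comm]; exact hxw
  -- nonzero sums
  set sx := ∑ v, x v with hsx
  set sw := ∑ v, w v with hsw
  have hμpos : 0 < 1 + μ + lamn := by linarith
  have hmu1pos : 0 < 1 + mu1 + lamn := by linarith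
  have hsx0 : sx ≠ 0 := by
    have := key_ineq G lamn hmin μ x hx
    intro h
    rw [← hsx, h] at this
    nlinarith
  have hsw0 : sw ≠ 0 := by
    have := key_ineq G lamn hmin mu1 w hw
    intro h
    rw [← hsw, h] at this
    nlinarith
  -- the contradiction vector
  set z : V → ℝ := sw • x - sx • w with hzdef
  have hsz : ∑ v, z v = 0 := by
    simp only [hzdef, Pi.sub_apply, Pi.smul_apply, smul_eq_mul, Finset.sum_sub_distrib,
      ← Finset.mul_sum, ← hsx, ← hsw]
    ring
  have hzz : z ⬝ᵥ z = sw ^ 2 * (x ⬝ᵥ x) + sx ^ 2 * (w ⬝ᵥ w) := by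
    simp only [hzdef, sub_dotProduct, dotProduct_sub, smul_dotProduct,
      dotProduct_smul, smul_eq_mul, hxw, hwx]
    ring
  have hBz : B *ᵥ z = sw • (μ • x) - sx • (mu1 • w) := by
    rw [hzdef, Matrix.mulVec_sub, Matrix.mulVec_smul, Matrix.mulVec_smul, hx, hw]
  have hzBz : z ⬝ᵥ (B *ᵥ z) = sw ^ 2 * μ * (x ⬝ᵥ x) + sx ^ 2 * mu1 * (w ⬝ᵥ w) := by
    rw [hBz]
    simp only [hzdef, sub_dotProduct, dotProduct_sub, smul_dotProduct,
      dotProduct_smul, smul_eq_mul, hxw, hwx]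
    ring
  have h1 := rayleigh_lower G lamn hmin z
  have h2 := quad_identity G z
  rw [h2, hzBz, hsz, hzz] at h1
  have hx2 : 0 < sw ^ 2 * (x ⬝ᵥ x) := by positivity
  have hw2 : 0 < sx ^ 2 * (w ⬝ᵥ w) := by positivity
  nlinarith [h1, hx2, hw2, hμpos, hmu1pos]
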